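/- For every self-adjoint projection E ∈ Mₙ(ℂ), positive semidefinite A ∈ Mₙ(ℂ), and p, q ≥ 0: ‖E A^p E‖ · ‖E A^q E‖ ≤ ‖E A^{p+q} E‖, where ‖·‖ is the operator norm. -/

import Mathlib

open scoped Matrix ComplexOrder

/-- `A^p` for a matrix, via continuous functional calculus with the real power function. -/
noncomputable def mpow {n : ℕ} (A : Matrix (Fin n) (Fin n) ℂ) (p : ℝ) : Matrix (Fin n) (Fin n) ℂ :=
  cfc (fun x : ℝ => x ^ p) A

/-- Matrix absolute value `|X| = (XᴴX)^{1/2}`. -/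
noncomputable def matAbs {n : ℕ} (X : Matrix (Fin n) (Fin n) ℂ) : Matrix (Fin n) (Fin n) ℂ :=
  cfc Real.sqrt (Xᴴ * X)

/-- Loewner order: `X ≤ Y` iff `Y - X` is positive semidefinite. -/
def loewnerLE {n : ℕ} (X Y : Matrix (Fin n) (Fin n) ℂ) : Prop := (Y - X).PosSemidef

open Matrix

lemma quad_form {n : ℕ} {A : Matrix (Fin n) (Fin n) ℂ} (hA : A.IsHermitian) (f : ℝ → ℝ) (w : Fin n → ℂ) :
    star w ⬝ᵥ (cfc f A *ᵥ w) =
      ((∑ j, f (hA.eigenvalues j) *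
        Complex.normSq ((star (hA.eigenvectorUnitary : Matrix (Fin n) (Fin n) ℂ) *ᵥ w) j) : ℝ) : ℂ) := by
  rw [hA.cfc_eq, Matrix.IsHermitian.cfc, Unitary.conjStarAlgAut_apply]
  set U := (hA.eigenvectorUnitary : Matrix (Fin n) (Fin n) ℂ) with hU
  set y := star U *ᵥ w with hy
  rw [← Matrix.mulVec_mulVec, ← Matrix.mulVec_mulVec, Matrix.dotProduct_mulVec]
  have h1 : Matrix.vecMul (star w) U = star y := by
    rw [hy, Matrix.star_mulVec, Matrix.star_eq_conjTranspose, Matrix.conjTranspose_conjTranspose]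
  rw [h1, ← hy, dotProduct, Complex.ofReal_sum]
  refine Finset.sum_congr rfl fun j _ => ?_
  simp only [Matrix.mulVec_diagonal, Pi.star_apply, Function.comp_apply]
  push_cast
  rw [Complex.star_def]
  rw [mul_left_comm, Complex.conj_mul']
  simp [Complex.normSq_eq_norm_sq]

open scoped Matrix.Norms.L2Operator in
lemma herm_norm_eq_eig {n : ℕ} [NeZero n] {M : Matrix (Fin n) (Fin n) ℂ} (hM : M.IsHermitian) :
    ∃ i, hM.eigenvalues i = ‖M‖ ∨ hM.eigenvalues i = -‖M‖ := by
  letI : CStarAlgebra (Matrix (Fin n) (Fin n) ℂ) := inferInstance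
  have h := CStarAlgebra.norm_or_neg_norm_mem_spectrum (a := M) (show IsSelfAdjoint M from hM)
  rw [hM.spectrum_real_eq_range_eigenvalues] at h
  rcases h with h | h
  · obtain ⟨i, hi⟩ := h; exact ⟨i, Or.inl hi⟩
  · obtain ⟨i, hi⟩ := h; exact ⟨i, Or.inr hi⟩

open scoped Matrix.Norms.L2Operator in
lemma proj_norm_le_one {n : ℕ} {E : Matrix (Fin n) (Fin n) ℂ} (hE : Eᴴ = E) (hE2 : E * E = E) :
    ‖E‖ ≤ 1 := by
  have h := Matrix.l2_opNorm_conjTranspose_mul_self E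
  rw [hE, hE2] at h
  nlinarith [norm_nonneg E]

lemma sandwich {n : ℕ} (E X : Matrix (Fin n) (Fin n) ℂ) (hE : Eᴴ = E) (v : Fin n → ℂ) :
    star v ⬝ᵥ ((E * X * E) *ᵥ v) = star (E *ᵥ v) ⬝ᵥ (X *ᵥ (E *ᵥ v)) := by
  rw [← Matrix.mulVec_mulVec, ← Matrix.mulVec_mulVec, Matrix.dotProduct_mulVec (star v) E]
  congr 1
  exact (by rw [Matrix.star_mulVec, hE] : star (E *ᵥ v) = _).symm

open scoped Matrix.Norms.L2Operator in
lemma quad_le_norm {n : ℕ} (M : Matrix (Fin n) (Fin n) ℂ) (v : Fin n → ℂ)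
    (hv : ‖(WithLp.equiv 2 (Fin n → ℂ)).symm v‖ ≤ 1) :
    Complex.re (star v ⬝ᵥ (M *ᵥ v)) ≤ ‖M‖ := by
  set v' : EuclideanSpace ℂ (Fin n) := (WithLp.equiv 2 (Fin n → ℂ)).symm v with hv'
  have h1 : star v ⬝ᵥ (M *ᵥ v) =
      inner (𝕜 := ℂ) v' ((WithLp.equiv 2 (Fin n → ℂ)).symm (M *ᵥ v)) :=
    by rw [dotProduct_comm]; exact (EuclideanSpace.inner_toLp_toLp v (M *ᵥ v)).symm
  rw [h1]
  have h2 := norm_inner_le_norm (𝕜 := ℂ) v' ((WithLp.equiv 2 (Fin n → ℂ)).symm (M *ᵥ v))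
  have h3 : ‖(WithLp.equiv 2 (Fin n → ℂ)).symm (M *ᵥ v)‖ ≤ ‖M‖ * ‖v'‖ :=
    M.l2_opNorm_mulVec v'
  have h4 := Complex.re_le_norm (inner (𝕜 := ℂ) v' ((WithLp.equiv 2 (Fin n → ℂ)).symm (M *ᵥ v)))
  have h5 : (0:ℝ) ≤ ‖M‖ := norm_nonneg M
  have h6 : (0:ℝ) ≤ ‖v'‖ := norm_nonneg v'
  nlinarith [norm_nonneg ((WithLp.equiv 2 (Fin n → ℂ)).symm (M *ᵥ v))]

lemma holder_sum {n : ℕ} (a b : Fin n → ℝ) (ha : ∀ i, 0 ≤ a i) (hb : ∀ i, 0 ≤ b i)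
    {θ : ℝ} (hθ : 0 < θ) (hθ1 : θ < 1) :
    ∑ i, (a i) ^ θ * (b i) ^ (1 - θ) ≤ (∑ i, a i) ^ θ * (∑ i, b i) ^ (1 - θ) := by
  have h1θ : 0 < 1 - θ := by linarith
  have hpq : (1/θ).HolderConjugate (1/(1-θ)) := by
    rw [Real.holderConjugate_iff]
    constructor
    · rw [lt_div_iff₀ hθ]; linarith
    · simp
  have key := Real.inner_le_Lp_mul_Lq_of_nonneg (Finset.univ)
    (f := fun i => (a i) ^ θ) (g := fun i => (b i) ^ (1 - θ)) hpq
    (fun i _ => Real.rpow_nonneg (ha i) θ) (fun i _ => Real.rpow_nonneg (hb i) (1-θ))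
  have e1 : ∀ i : Fin n, ((a i) ^ θ) ^ (1/θ) = a i := fun i => by
    rw [← Real.rpow_mul (ha i), mul_one_div_cancel hθ.ne', Real.rpow_one]
  have e2 : ∀ i : Fin n, ((b i) ^ (1-θ)) ^ (1/(1-θ)) = b i := fun i => by
    rw [← Real.rpow_mul (hb i), mul_one_div_cancel h1θ.ne', Real.rpow_one]
  simp only [e1, e2] at key
  rw [one_div_one_div, one_div_one_div] at key
  exact key

open scoped Matrix.Norms.L2Operator in
lemma key_ineq {n : ℕ} [NeZero n] (E A : Matrix (Fin n) (Fin n) ℂ)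
    (hE : Eᴴ = E) (hE2 : E * E = E) (hA : A.PosSemidef) {p q : ℝ} (hp : 0 < p) (hq : 0 < q) :
    ‖E * mpow A p * E‖ ≤ ‖E * mpow A (p + q) * E‖ ^ (p / (p + q)) := by
  have hpq : 0 < p + q := by linarith
  set θ := p / (p + q) with hθdef
  have hθ : 0 < θ := div_pos hp hpq
  have hθ1 : θ < 1 := (div_lt_one hpq).2 (by linarith)
  have hXp : (mpow A p).IsHermitian := by unfold mpow; exact cfc_predicate _ A
  have hherm : (E * mpow A p * E).IsHermitian := by
    have h := Matrix.isHermitian_mul_mul_conjTranspose E hXp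
    rwa [hE] at h
  obtain ⟨i, hi⟩ := herm_norm_eq_eig hherm
  set v : Fin n → ℂ := ⇑(hherm.eigenvectorBasis i) with hv
  set w : Fin n → ℂ := E *ᵥ v with hw
  set lam : Fin n → ℝ := hA.1.eigenvalues with hlam
  set c : Fin n → ℝ :=
    fun j => Complex.normSq ((star (hA.1.eigenvectorUnitary : Matrix (Fin n) (Fin n) ℂ) *ᵥ w) j)
    with hc
  have hvnorm : ‖hherm.eigenvectorBasis i‖ = 1 := hherm.eigenvectorBasis.orthonormal.1 i
  have hcnn : ∀ j, 0 ≤ c j := fun j => Complex.normSq_nonneg _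
  have hlnn : ∀ j, 0 ≤ lam j := fun j => hA.eigenvalues_nonneg j
  -- quadratic form identities
  have quadr : ∀ r : ℝ, Complex.re (star v ⬝ᵥ ((E * mpow A r * E) *ᵥ v)) = ∑ j, lam j ^ r * c j := by
    intro r
    rw [sandwich E _ hE, ← hw]
    rw [show mpow A r = cfc (fun x : ℝ => x ^ r) A from rfl, quad_form hA.1]
    rw [Complex.ofReal_re]
  -- the eigenvalue is the sum
  have heq : hherm.eigenvalues i = ∑ j, lam j ^ p * c j := by
    rw [hherm.eigenvalues_eq i, ← hv]
    exact quadr p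
  have hsum_nn : 0 ≤ ∑ j, lam j ^ p * c j :=
    Finset.sum_nonneg fun j _ => mul_nonneg (Real.rpow_nonneg (hlnn j) _) (hcnn j)
  -- ‖v‖ ≤ 1 in EuclideanSpace form
  have hveq : (WithLp.equiv 2 (Fin n → ℂ)).symm v = hherm.eigenvectorBasis i := rfl
  have hv1 : ‖(WithLp.equiv 2 (Fin n → ℂ)).symm v‖ ≤ 1 := by rw [hveq, hvnorm]
  -- Σ c ≤ 1
  have hcle : ∑ j, c j ≤ 1 := by
    have h1 : star w ⬝ᵥ ((1 : Matrix (Fin n) (Fin n) ℂ) *ᵥ w) = ((∑ j, c j : ℝ) : ℂ) := by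
      have hone : cfc (fun _ : ℝ => (1:ℝ)) A = 1 := cfc_const_one ℝ A hA.1
      have := quad_form hA.1 (fun _ => 1) w
      rw [hone] at this
      simpa using this
    rw [Matrix.one_mulVec] at h1
    have h2 : ∑ j, c j = Complex.re (star v ⬝ᵥ ((E * 1 * E) *ᵥ v)) := by
      rw [sandwich E _ hE, ← hw, Matrix.one_mulVec, h1, Complex.ofReal_re]
    rw [h2]
    calc Complex.re (star v ⬝ᵥ ((E * 1 * E) *ᵥ v)) ≤ ‖E * 1 * E‖ := quad_le_norm _ v hv1
      _ = ‖E‖ := by rw [mul_one, hE2]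
      _ ≤ 1 := proj_norm_le_one hE hE2
  -- Σ lam^{p+q} c ≤ N
  set N := ‖E * mpow A (p + q) * E‖ with hN
  have hNnn : 0 ≤ N := norm_nonneg _
  have hNle : ∑ j, lam j ^ (p + q) * c j ≤ N := by
    rw [← quadr (p + q)]
    exact quad_le_norm _ v hv1
  -- Hölder
  have hpoint : ∀ j, lam j ^ p * c j = (lam j ^ (p+q) * c j) ^ θ * (c j) ^ (1 - θ) := by
    intro j
    have h1 : (lam j ^ (p+q) * c j) ^ θ = lam j ^ p * c j ^ θ := by
      rw [Real.mul_rpow (Real.rpow_nonneg (hlnn j) _) (hcnn j), ← Real.rpow_mul (hlnn j)]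
      congr 1
      rw [hθdef]
      field_simp
    rw [h1, mul_assoc, ← Real.rpow_add' (hcnn j) (by norm_num)]
    norm_num
  have hhold : ∑ j, lam j ^ p * c j ≤
      (∑ j, lam j ^ (p+q) * c j) ^ θ * (∑ j, c j) ^ (1 - θ) := by
    calc ∑ j, lam j ^ p * c j = ∑ j, (lam j ^ (p+q) * c j) ^ θ * (c j) ^ (1 - θ) :=
          Finset.sum_congr rfl fun j _ => hpoint j
      _ ≤ _ := holder_sum _ _ (fun j => mul_nonneg (Real.rpow_nonneg (hlnn j) _) (hcnn j)) hcnn hθ hθ1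
  have hfin : ∑ j, lam j ^ p * c j ≤ N ^ θ := by
    calc ∑ j, lam j ^ p * c j ≤ (∑ j, lam j ^ (p+q) * c j) ^ θ * (∑ j, c j) ^ (1 - θ) := hhold
      _ ≤ N ^ θ * 1 := by
          apply mul_le_mul
          · exact Real.rpow_le_rpow (Finset.sum_nonneg fun j _ =>
              mul_nonneg (Real.rpow_nonneg (hlnn j) _) (hcnn j)) hNle hθ.le
          · exact Real.rpow_le_one (Finset.sum_nonneg fun j _ => hcnn j) hcle (by linarith)
          · exact Real.rpow_nonneg (Finset.sum_nonneg fun j _ => hcnn j) _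
          · exact Real.rpow_nonneg hNnn _
      _ = N ^ θ := mul_one _
  rcases hi with hi | hi
  · rw [← hi, heq]; exact hfin
  · have : ‖E * mpow A p * E‖ = -(∑ j, lam j ^ p * c j) := by rw [← heq, hi, neg_neg]
    have h0 : ‖E * mpow A p * E‖ ≤ 0 := by rw [this]; linarith
    exact h0.trans (Real.rpow_nonneg hNnn _)

open scoped Matrix.Norms.L2Operator in
/-- For a self-adjoint projection `E`, `A ≥ 0` and `p, q ≥ 0`,
`‖E A^p E‖ ‖E A^q E‖ ≤ ‖E A^{p+q} E‖` in the operator norm. -/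
theorem compression_norm_inequality {n : ℕ} (E A : Matrix (Fin n) (Fin n) ℂ)
    (hE : Eᴴ = E) (hE2 : E * E = E) (hA : A.PosSemidef) (p q : ℝ) (hp : 0 ≤ p) (hq : 0 ≤ q) :
    ‖E * mpow A p * E‖ * ‖E * mpow A q * E‖ ≤ ‖E * mpow A (p + q) * E‖ := by
  rcases Nat.eq_zero_or_pos n with rfl | hn
  · have h0 : ∀ M : Matrix (Fin 0) (Fin 0) ℂ, ‖M‖ = 0 := fun M => by
      rw [Subsingleton.elim M 0, norm_zero]
    simp [h0]
  haveI : NeZero n := ⟨hn.ne'⟩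
  rcases hp.eq_or_lt with rfl | hp'
  · have h0 : mpow A (0:ℝ) = 1 := by
      rw [mpow, show (fun x : ℝ => x ^ (0:ℝ)) = fun _ : ℝ => (1:ℝ) from funext fun x => Real.rpow_zero x]
      exact cfc_const_one ℝ A hA.1
    rw [h0, mul_one, hE2, zero_add]
    exact mul_le_of_le_one_left (norm_nonneg _) (proj_norm_le_one hE hE2)
  rcases hq.eq_or_lt with rfl | hq'
  · have h0 : mpow A (0:ℝ) = 1 := by
      rw [mpow, show (fun x : ℝ => x ^ (0:ℝ)) = fun _ : ℝ => (1:ℝ) from funext fun x => Real.rpow_zero x]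
      exact cfc_const_one ℝ A hA.1
    rw [h0, mul_one, hE2, add_zero]
    exact mul_le_of_le_one_right (norm_nonneg _) (proj_norm_le_one hE hE2)
  have h1 := key_ineq E A hE hE2 hA hp' hq'
  have h2 := key_ineq E A hE hE2 hA hq' hp'
  rw [add_comm q p] at h2
  have hpq : (0:ℝ) < p + q := by linarith
  calc ‖E * mpow A p * E‖ * ‖E * mpow A q * E‖
      ≤ ‖E * mpow A (p+q) * E‖ ^ (p/(p+q)) * ‖E * mpow A (p+q) * E‖ ^ (q/(p+q)) :=
        mul_le_mul h1 h2 (norm_nonneg _) (Real.rpow_nonneg (norm_nonneg _) _)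
    _ = ‖E * mpow A (p+q) * E‖ := by
        rw [← Real.rpow_add' (norm_nonneg _) (by rw [← add_div, div_self hpq.ne']; norm_num),
          ← add_div, div_self hpq.ne', Real.rpow_one]
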